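/- Let u be an extended odometer on the integer interval [0,n] (a function u: ℤ → ℤ vanishing outside [0,n]), with instruction lists and initial configuration σ fixed, and define f_v = R_u(v) − L_u(v+1) (net flow from v to v+1) and s_v = Σ_{i=1}^v 1{instr_i(u(i)) = sleep}. Then u is stable on [1, n−1] if and only if f_v = f₀ + Σ_{i=1}^v |σ(i)| − s_v for all v ∈ [0, n−1]. -/

import Mathlib

/-- ARW instructions. -/
inductive Instr : Type
  | left
  | right
  | sleep
deriving DecidableEq

/-- Signed count of `left` instructions executed at site `v` by the extended
odometer `u`: for `u v ≥ 0` the number of `left`s among instructions `1,…,u v`,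
and for `u v < 0` the negative of the number of `left`s among instructions
`u v + 1,…,0`. -/
noncomputable def Lcount (instr : ℤ → ℤ → Instr) (u : ℤ → ℤ) (v : ℤ) : ℤ :=
  if 0 ≤ u v then
    (((Finset.Icc 1 (u v)).filter fun i => instr v i = Instr.left).card : ℤ)
  else
    -((((Finset.Icc (u v + 1) 0).filter fun i => instr v i = Instr.left).card : ℤ))

/-- Signed count of `right` instructions executed at site `v` by `u`. -/
noncomputable def Rcount (instr : ℤ → ℤ → Instr) (u : ℤ → ℤ) (v : ℤ) : ℤ :=
  if 0 ≤ u v then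
    (((Finset.Icc 1 (u v)).filter fun i => instr v i = Instr.right).card : ℤ)
  else
    -((((Finset.Icc (u v + 1) 0).filter fun i => instr v i = Instr.right).card : ℤ))

/-- The number of particles left at `v` by the extended odometer `u`, for the
initial (all-active) configuration `σ`. -/
noncomputable def height (instr : ℤ → ℤ → Instr) (σ : ℤ → ℕ) (u : ℤ → ℤ) (v : ℤ) : ℤ :=
  (σ v : ℤ) + Rcount instr u (v - 1) + Lcount instr u (v + 1)
    - Lcount instr u v - Rcount instr u v

/-- Stability of the extended odometer `u` at site `v`. -/
def StableAt (instr : ℤ → ℤ → Instr) (σ : ℤ → ℕ) (u : ℤ → ℤ) (v : ℤ) : Prop :=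
  (height instr σ u v = 0 ∨ height instr σ u v = 1) ∧
    (height instr σ u v = 1 ↔ instr v (u v) = Instr.sleep)

-- aux lemmas
lemma icc_insert (v : ℤ) (hv : 1 ≤ v) :
    Finset.Icc (1:ℤ) v = insert v (Finset.Icc 1 (v-1)) := by
  ext x; simp; omega

lemma s_step (instr : ℤ → ℤ → Instr) (u : ℤ → ℤ) (s : ℤ → ℤ)
    (hs : ∀ v, s v =
      (((Finset.Icc (1 : ℤ) v).filter fun i => instr i (u i) = Instr.sleep).card : ℤ))
    (v : ℤ) (hv : 1 ≤ v) :
    s v = s (v-1) + (if instr v (u v) = Instr.sleep then 1 else 0) := by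
  rw [hs v, hs (v-1), icc_insert v hv, Finset.filter_insert]
  have hnm : v ∉ Finset.Icc (1:ℤ) (v-1) := by simp
  split
  · rw [Finset.card_insert_of_notMem (fun h => hnm (Finset.mem_of_mem_filter _ h))]
    push_cast; ring
  · simp

lemma height_eq (instr : ℤ → ℤ → Instr) (σ : ℤ → ℕ) (u : ℤ → ℤ)
    (f : ℤ → ℤ) (hf : ∀ v, f v = Rcount instr u v - Lcount instr u (v + 1)) (v : ℤ) :
    height instr σ u v = (σ v : ℤ) + f (v-1) - f v := by
  have h1 := hf v
  have h2 := hf (v-1)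
  rw [sub_add_cancel] at h2
  unfold height
  linarith


/-- Lemma 3.2 (`lem:flow`): an extended odometer `u` on `[0,n]` is stable on
`[1,n-1]` iff the net flows satisfy
`f v = f 0 + ∑_{i=1}^v |σ i| − s v` for all `v ∈ [0,n-1]`, where
`f v = R_u(v) − L_u(v+1)` and `s v = #{1 ≤ i ≤ v : instr_i(u i) = sleep}`. -/
theorem odometer_stable_iff_flow (instr : ℤ → ℤ → Instr)
    (hinstr0 : ∀ v, instr v 0 = Instr.left)
    (σ : ℤ → ℕ) (n : ℤ) (u : ℤ → ℤ)
    (hsupp : ∀ v : ℤ, v ∉ Finset.Icc (0 : ℤ) n → u v = 0)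
    (f : ℤ → ℤ) (hf : ∀ v, f v = Rcount instr u v - Lcount instr u (v + 1))
    (s : ℤ → ℤ)
    (hs : ∀ v, s v =
      (((Finset.Icc (1 : ℤ) v).filter fun i => instr i (u i) = Instr.sleep).card : ℤ)) :
    (∀ v ∈ Finset.Icc (1 : ℤ) (n - 1), StableAt instr σ u v) ↔
      (∀ v ∈ Finset.Icc (0 : ℤ) (n - 1),
        f v = f 0 + (∑ i ∈ Finset.Icc (1 : ℤ) v, (σ i : ℤ)) - s v) := by
  have hs0 : s 0 = 0 := by rw [hs]; simp
  have hsum_step : ∀ v : ℤ, 1 ≤ v →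
      (∑ i ∈ Finset.Icc (1 : ℤ) v, (σ i : ℤ)) =
        (∑ i ∈ Finset.Icc (1 : ℤ) (v-1), (σ i : ℤ)) + (σ v : ℤ) := by
    intro v hv
    rw [icc_insert v hv, Finset.sum_insert (by simp)]; ring
  constructor
  · intro hst
    have key : ∀ v : ℤ, 0 ≤ v → v ≤ n - 1 →
        f v = f 0 + (∑ i ∈ Finset.Icc (1 : ℤ) v, (σ i : ℤ)) - s v := by
      refine Int.le_induction (fun _ => ?_) (fun v hv ih hvn => ?_)
      · simp [hs0]
      · have ihv := ih (by omega)
        have hstv := hst (v+1) (by simp only [Finset.mem_Icc]; omega)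
        have hh := height_eq instr σ u f hf (v+1)
        have hss := s_step instr u s hs (v+1) (by omega)
        have hsum := hsum_step (v+1) (by omega)
        have e : v + 1 - 1 = v := by ring
        rw [e] at hh hss hsum
        by_cases hc : instr (v+1) (u (v+1)) = Instr.sleep
        · have hind : height instr σ u (v+1) = 1 := hstv.2.mpr hc
          rw [if_pos hc] at hss
          linarith
        · have hind : height instr σ u (v+1) = 0 := by
            rcases hstv.1 with h | h
            · exact h
            · exact absurd (hstv.2.mp h) hc
          rw [if_neg hc] at hss
          linarith
    intro v hv
    simp only [Finset.mem_Icc] at hv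
    exact key v hv.1 hv.2
  · intro hfl v hv
    simp only [Finset.mem_Icc] at hv
    have e1 := hfl v (by simp only [Finset.mem_Icc]; omega)
    have e2 := hfl (v-1) (by simp only [Finset.mem_Icc]; omega)
    have hh := height_eq instr σ u f hf v
    have hss := s_step instr u s hs v (by omega)
    have hsum := hsum_step v (by omega)
    have hind : height instr σ u v
        = (if instr v (u v) = Instr.sleep then 1 else 0) := by
      rw [hh, e1, e2, hsum, hss]; ring
    constructor
    · split at hind
      · right; exact hind
      · left; exact hind
    · constructor
      · intro h1
        by_contra hsl
        rw [if_neg hsl] at hind; omega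
      · intro hsl; rw [hind, if_pos hsl]
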